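/- arXiv:2603.08440 — 4 statements merged into one kernel-verified Lean document; each statement's English description precedes it below -/
import Mathlib

section
/- Let E be a real Banach space and A, B : E → E. Let Φ : ℝ → E → E satisfy: (i) Φ(0) = id; (ii) the group property Φ(s+t)(x) = Φ(s)(Φ(t)(x)) for all s, t ∈ ℝ and x ∈ E; (iii) the map (τ, x) ↦ Φ(τ)(x) is continuously differentiable with ∂_τ Φ(τ)(x) = A(Φ(τ)(x)) for all τ, x; (iv) each Φ(t) is affine, i.e. there exist a continuous linear map T(t) : E → E and a vector c(t) ∈ E with Φ(t)(x) = T(t)(x) + c(t) for all x. Let t > 0 and let v : [0, t] → E be differentiable with v'(s) = A(v(s)) + B(v(s)) for all s ∈ [0, t], and assume s ↦ T(t−s)(B(v(s))) is continuous on [0, t]. Then v(t) = Φ(t)(v(0)) + ∫₀ᵗ T(t−s)(B(v(s))) ds. -/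
open intervalIntegral

/-- Abstract Duhamel formula for a splitting with an affine linear part: if `Φ` is
a group flow of the vector field `A`, each `Φ t` being affine with linear part
`T t`, and `v` solves `v' = A(v) + B(v)` on `[0,t]`, then
`v(t) = Φ(t)(v(0)) + ∫₀ᵗ T(t−s)(B(v(s))) ds`. -/
theorem duhamel_affine
    {E : Type*} [NormedAddCommGroup E] [NormedSpace ℝ E] [CompleteSpace E]
    (A B : E → E) (Φ : ℝ → E → E) (T : ℝ → E →L[ℝ] E) (c : ℝ → E)
    (h0 : ∀ x : E, Φ 0 x = x)
    (hgrp : ∀ s t : ℝ, ∀ x : E, Φ (s + t) x = Φ s (Φ t x))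
    (hC1 : ContDiff ℝ 1 (fun p : ℝ × E => Φ p.1 p.2))
    (hflow : ∀ (τ : ℝ) (x : E), HasDerivAt (fun σ => Φ σ x) (A (Φ τ x)) τ)
    (haff : ∀ (t : ℝ) (x : E), Φ t x = T t x + c t)
    (t : ℝ) (ht : 0 < t) (v : ℝ → E)
    (hv : ∀ s ∈ Set.Icc (0 : ℝ) t, HasDerivAt v (A (v s) + B (v s)) s)
    (hcont : ContinuousOn (fun s : ℝ => T (t - s) (B (v s))) (Set.Icc 0 t)) :
    v t = Φ t (v 0) + ∫ s in (0 : ℝ)..t, T (t - s) (B (v s)) := by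
  set F : ℝ × E → E := fun p => Φ p.1 p.2 with hF
  have hFdiff : Differentiable ℝ F := hC1.differentiable one_ne_zero
  -- A(Φ τ x) = T τ (A x)
  have hTA : ∀ (τ : ℝ) (x : E), A (Φ τ x) = T τ (A x) := by
    intro τ x
    have hin : HasDerivAt (fun σ : ℝ => τ + σ) 1 0 := by
      simpa using (hasDerivAt_id (0:ℝ)).const_add τ
    have h1 : HasDerivAt (fun σ : ℝ => Φ (τ + σ) x) (A (Φ τ x)) 0 := by
      have := ((hflow (τ + 0) x).scomp 0 hin)
      simpa [Function.comp_def] using this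
    have h2 : HasDerivAt (fun σ : ℝ => Φ τ (Φ σ x)) (T τ (A x)) 0 := by
      have hx : HasDerivAt (fun σ : ℝ => Φ σ x) (A (Φ 0 x)) 0 := hflow 0 x
      rw [h0 x] at hx
      have hcomp := (T τ).hasFDerivAt.comp_hasDerivAt 0 hx
      have heq : (fun σ : ℝ => Φ τ (Φ σ x)) = fun σ => T τ (Φ σ x) + c τ := by
        funext σ; rw [haff]
      rw [heq]
      exact hcomp.add_const _
    have h1' : HasDerivAt (fun σ : ℝ => Φ τ (Φ σ x)) (A (Φ τ x)) 0 := by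
      have heq : (fun σ : ℝ => Φ (τ + σ) x) = fun σ => Φ τ (Φ σ x) := by
        funext σ; rw [hgrp]
      rwa [heq] at h1
    exact h1'.unique h2
  -- partial derivative in the time variable
  have hpart1 : ∀ (τ : ℝ) (x : E), fderiv ℝ F (τ, x) (1, 0) = A (Φ τ x) := by
    intro τ x
    have hcurve : HasDerivAt (fun σ : ℝ => ((σ : ℝ), x)) ((1:ℝ), (0:E)) τ :=
      HasDerivAt.prodMk (hasDerivAt_id τ) (hasDerivAt_const τ x)
    have h := (hFdiff (τ, x)).hasFDerivAt.comp_hasDerivAt τ hcurve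
    exact h.unique (hflow τ x)
  -- partial derivative in the space variable
  have hpart2 : ∀ (τ : ℝ) (x w : E), fderiv ℝ F (τ, x) (0, w) = T τ w := by
    intro τ x w
    have hcurve : HasFDerivAt (fun y : E => ((τ:ℝ), y))
        ((0 : E →L[ℝ] ℝ).prod (ContinuousLinearMap.id ℝ E)) x :=
      HasFDerivAt.prodMk (hasFDerivAt_const τ x) (hasFDerivAt_id x)
    have h1 := (hFdiff (τ, x)).hasFDerivAt.comp x hcurve
    have h2 : HasFDerivAt (fun y : E => F (τ, y)) (T τ) x := by
      have heq : (fun y : E => F (τ, y)) = fun y => T τ y + c τ := by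
        funext y; exact haff τ y
      rw [heq]
      exact (T τ).hasFDerivAt.add_const _
    have heqmap := h1.unique h2
    have := congrArg (fun (M : E →L[ℝ] E) => M w) heqmap
    simpa using this
  -- derivative of the auxiliary function
  have hg : ∀ s ∈ Set.uIcc (0:ℝ) t,
      HasDerivAt (fun s => Φ (t - s) (v s)) (T (t - s) (B (v s))) s := by
    intro s hs
    rw [Set.uIcc_of_le ht.le] at hs
    have hcurve : HasDerivAt (fun s : ℝ => (t - s, v s)) ((-1 : ℝ), A (v s) + B (v s)) s :=
      HasDerivAt.prodMk ((hasDerivAt_id s).const_sub t) (hv s hs)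
    have h := (hFdiff (t - s, v s)).hasFDerivAt.comp_hasDerivAt s hcurve
    have hsplit : ((-1 : ℝ), A (v s) + B (v s))
        = (-(1:ℝ)) • ((1:ℝ), (0:E)) + ((0:ℝ), A (v s) + B (v s)) := by
      simp
    have hval : fderiv ℝ F (t - s, v s) (-1, A (v s) + B (v s)) = T (t - s) (B (v s)) := by
      rw [hsplit, map_add, map_smul, hpart1, hpart2, hTA, map_add]
      simp
    rw [hval] at h
    exact h
  have hint : IntervalIntegrable (fun s => T (t - s) (B (v s))) MeasureTheory.volume 0 t := by
    apply ContinuousOn.intervalIntegrable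
    rwa [Set.uIcc_of_le ht.le]
  have hkey := intervalIntegral.integral_eq_sub_of_hasDerivAt hg hint
  simp only [sub_self, sub_zero, h0] at hkey
  rw [hkey]
  abel
end

section
/- Let E be a real Banach space, L : E → E a continuous linear map, c ∈ E, and let A : E → E be the affine map A(x) = L(x) + c. Let T : ℝ → (continuous linear maps E → E) satisfy: for every x ∈ E the map s ↦ T(s)(x) is differentiable with derivative L(T(s)(x)), and T(s) ∘ L = L ∘ T(s) for all s. Let Φ : ℝ → E → E be a flow of A of the form Φ(s)(x) = T(s)(x) + γ(s), satisfying ∂_s Φ(s)(x) = A(Φ(s)(x)) for all s and x. Let B : E → E be continuously differentiable, let v₀ ∈ E, τ ∈ ℝ, and set f(s) := T(τ−s)(B(Φ(s)(v₀))). Then f is differentiable and, for all s, f'(s) = T(τ−s)( [B,A](Φ(s)(v₀)) ), where [B,A](u) := B'(u)[A(u)] − L(B(u)) (i.e. B'(u)[A(u)] − A'(u)[B(u)], since A'(u) = L). -/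
/-- Key analytic lemma: if `u` has derivative `d` at `s`, and `S : ℝ → E →L[ℝ] E`
is pointwise continuous (each `σ ↦ S σ x` continuous), then
`σ ↦ S σ (u σ - u s)` has derivative `S s d` at `s`. -/
theorem aux_deriv_moving_op {E : Type*} [NormedAddCommGroup E] [NormedSpace ℝ E]
    [CompleteSpace E]
    (S : ℝ → E →L[ℝ] E) (hScont : ∀ x : E, Continuous fun σ : ℝ => S σ x)
    (u : ℝ → E) (d : E) (s : ℝ) (hu : HasDerivAt u d s) :
    HasDerivAt (fun σ : ℝ => S σ (u σ - u s)) (S s d) s := by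
  -- uniform bound on ‖S σ‖ for σ in a compact neighborhood of s
  obtain ⟨C, hC⟩ : ∃ C, ∀ i : Set.Icc (s - 1) (s + 1), ‖S (i : ℝ)‖ ≤ C := by
    apply banach_steinhaus
    intro x
    obtain ⟨C, hC⟩ := (isCompact_Icc (a := s - 1) (b := s + 1)).exists_bound_of_continuousOn
      ((hScont x).norm.continuousOn)
    exact ⟨C, fun i => by simpa using hC i i.2⟩
  rw [hasDerivAt_iff_isLittleO]
  have key : (fun σ : ℝ => S σ (u σ - u s) - S s (u s - u s) - (σ - s) • S s d)
      = (fun σ : ℝ => S σ (u σ - u s - (σ - s) • d)) +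
        (fun σ : ℝ => (σ - s) • (S σ d - S s d)) := by
    funext σ
    simp [map_sub, map_smul, smul_sub]
  rw [key]
  apply Asymptotics.IsLittleO.add
  · -- first term: bounded operator applied to little-o
    have h1 : (fun σ : ℝ => u σ - u s - (σ - s) • d) =o[nhds s] fun σ => σ - s :=
      hasDerivAt_iff_isLittleO.mp hu
    refine (Asymptotics.IsBigO.trans_isLittleO ?_ h1)
    rw [Asymptotics.isBigO_iff]
    refine ⟨C, ?_⟩
    have hmem : Set.Icc (s - 1) (s + 1) ∈ nhds s :=
      Icc_mem_nhds (by linarith) (by linarith)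
    filter_upwards [hmem] with σ hσ
    calc ‖S σ (u σ - u s - (σ - s) • d)‖ ≤ ‖S σ‖ * ‖u σ - u s - (σ - s) • d‖ :=
          (S σ).le_opNorm _
      _ ≤ C * ‖u σ - u s - (σ - s) • d‖ := by
          gcongr
          exact hC ⟨σ, hσ⟩
  · -- second term
    have hw : Filter.Tendsto (fun σ : ℝ => S σ d - S s d) (nhds s) (nhds 0) := by
      have := ((hScont d).tendsto s).sub_const (S s d)
      simpa using this
    have hw' : (fun σ : ℝ => S σ d - S s d) =o[nhds s] (fun _ => (1 : ℝ)) :=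
      (Asymptotics.isLittleO_one_iff ℝ).mpr hw
    have hb : (fun σ : ℝ => σ - s) =O[nhds s] (fun σ : ℝ => σ - s) :=
      Asymptotics.isBigO_refl _ _
    simpa using hb.smul_isLittleO hw'

/-- First derivative of the quadrature-error function in the local error analysis
of the Lie splitting: with `A(x) = L(x) + c` affine, `T` the semigroup of `L`,
`Φ` the affine flow of `A`, and `B` continuously differentiable,
the function `f(s) = T(τ−s)(B(Φ(s)(v₀)))` satisfies
`f'(s) = T(τ−s)([B,A](Φ(s)(v₀)))` where `[B,A](u) = B'(u)[A(u)] − L(B(u))`. -/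
theorem lie_splitting_quadrature_derivative
    {E : Type*} [NormedAddCommGroup E] [NormedSpace ℝ E] [CompleteSpace E]
    (L : E →L[ℝ] E) (c : E) (A : E → E) (hA : ∀ x : E, A x = L x + c)
    (T : ℝ → E →L[ℝ] E)
    (hT : ∀ (x : E) (s : ℝ), HasDerivAt (fun σ : ℝ => T σ x) (L (T s x)) s)
    (hTL : ∀ (s : ℝ) (x : E), T s (L x) = L (T s x))
    (Φ : ℝ → E → E) (γ : ℝ → E)
    (hΦ : ∀ (s : ℝ) (x : E), Φ s x = T s x + γ s)
    (hflow : ∀ (s : ℝ) (x : E), HasDerivAt (fun σ : ℝ => Φ σ x) (A (Φ s x)) s)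
    (B : E → E) (hB : ContDiff ℝ 1 B) (v₀ : E) (τ : ℝ)
    (f : ℝ → E) (hf : ∀ s : ℝ, f s = T (τ - s) (B (Φ s v₀))) :
    ∀ s : ℝ, HasDerivAt f
      (T (τ - s) (fderiv ℝ B (Φ s v₀) (A (Φ s v₀)) - L (B (Φ s v₀)))) s := by
  intro s
  set u : ℝ → E := fun σ => B (Φ σ v₀) with hu_def
  set d : E := fderiv ℝ B (Φ s v₀) (A (Φ s v₀)) with hd_def
  -- u has derivative d at s
  have hu : HasDerivAt u d s := by
    have hBd : HasFDerivAt B (fderiv ℝ B (Φ s v₀)) (Φ s v₀) :=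
      (hB.differentiable one_ne_zero (Φ s v₀)).hasFDerivAt
    exact hBd.comp_hasDerivAt s (hflow s v₀)
  -- pointwise continuity of σ ↦ T (τ - σ) x
  have hScont : ∀ x : E, Continuous fun σ : ℝ => T (τ - σ) x := by
    intro x
    have h1 : Continuous fun σ : ℝ => T σ x := by
      apply continuous_iff_continuousAt.mpr
      intro σ
      exact (hT x σ).continuousAt
    exact h1.comp (continuous_const.sub continuous_id)
  -- derivative of σ ↦ T (τ - σ) (u σ - u s)
  have hg₂ : HasDerivAt (fun σ : ℝ => T (τ - σ) (u σ - u s)) (T (τ - s) d) s :=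
    aux_deriv_moving_op (fun σ => T (τ - σ)) hScont u d s hu
  -- derivative of σ ↦ T (τ - σ) (u s)
  have hg₁ : HasDerivAt (fun σ : ℝ => T (τ - σ) (u s))
      ((-1 : ℝ) • L (T (τ - s) (u s))) s := by
    have hinner : HasDerivAt (fun σ : ℝ => τ - σ) (-1) s := by
      simpa using ((hasDerivAt_id s).const_sub τ)
    exact (hT (u s) (τ - s)).scomp s hinner
  have hsum := hg₂.add hg₁
  have hfun : f = fun σ : ℝ => T (τ - σ) (u σ - u s) + T (τ - σ) (u s) := by
    funext σ
    rw [hf σ]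
    simp [map_sub, hu_def]
  rw [hfun]
  convert hsum using 1
  · rfl
  rw [map_sub, hTL]
  simp [hu_def]
  abel
end

section
/- Let E be a real Banach space, L : E → E a continuous linear map, c ∈ E, and let A : E → E be the affine map A(x) = L(x) + c. Let T : ℝ → (continuous linear maps E → E) satisfy: for every x ∈ E the map s ↦ T(s)(x) is differentiable with derivative L(T(s)(x)), and T(s) ∘ L = L ∘ T(s) for all s. Let Φ : ℝ → E → E be a flow of A of the form Φ(s)(x) = T(s)(x) + γ(s), satisfying ∂_s Φ(s)(x) = A(Φ(s)(x)) for all s and x. Let B : E → E be twice continuously differentiable, let v₀ ∈ E, τ ∈ ℝ, and set f(s) := T(τ−s)(B(Φ(s)(v₀))). Then f is twice differentiable and, for all s, f''(s) = T(τ−s)( [[B,A],A](Φ(s)(v₀)) ), where [B,A](u) := B'(u)[A(u)] − L(B(u)) and [[B,A],A](u) := ([B,A])'(u)[A(u)] − L([B,A](u)). -/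
open Asymptotics Filter Topology

lemma strang_key {E : Type*} [NormedAddCommGroup E] [NormedSpace ℝ E] [CompleteSpace E]
    (L : E →L[ℝ] E) (T : ℝ → E →L[ℝ] E)
    (hT : ∀ (x : E) (s : ℝ), HasDerivAt (fun σ : ℝ => T σ x) (L (T s x)) s)
    (hTL : ∀ (s : ℝ) (x : E), T s (L x) = L (T s x))
    (τ s₀ : ℝ) (h : ℝ → E) (h' : E) (hh : HasDerivAt h h' s₀) :
    HasDerivAt (fun s => T (τ - s) (h s)) (T (τ - s₀) (h' - L (h s₀))) s₀ := by
  -- uniform bound on ‖T σ‖ for σ in a compact neighborhood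
  have hcont : ∀ x : E, Continuous fun σ : ℝ => T σ x := fun x =>
    (continuous_iff_continuousAt.2 fun σ => (hT x σ).continuousAt)
  obtain ⟨M, hM⟩ : ∃ M : ℝ, ∀ i : Set.Icc (τ - s₀ - 1) (τ - s₀ + 1), ‖T i.1‖ ≤ M := by
    apply banach_steinhaus
    intro x
    obtain ⟨C, hC⟩ := (isCompact_Icc (a := τ - s₀ - 1) (b := τ - s₀ + 1)).exists_bound_of_continuousOn
      ((hcont x).continuousOn)
    exact ⟨C, fun i => hC i.1 i.2⟩
  -- second piece: frozen vector
  have hG2 : HasDerivAt (fun s => T (τ - s) (h s₀)) (-(L (T (τ - s₀) (h s₀)))) s₀ := by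
    have h1 : HasDerivAt (fun s : ℝ => τ - s) (-1 : ℝ) s₀ := by
      simpa using (hasDerivAt_id s₀).const_sub τ
    have := (hT (h s₀) (τ - s₀)).scomp s₀ h1
    simpa [Function.comp_def] using this
  -- first piece: moving vector, via little-o
  have hG1 : HasDerivAt (fun s => T (τ - s) (h s - h s₀)) (T (τ - s₀) h') s₀ := by
    rw [hasDerivAt_iff_isLittleO]
    have hho : (fun s => h s - h s₀ - (s - s₀) • h') =o[𝓝 s₀] fun s => s - s₀ :=
      hasDerivAt_iff_isLittleO.1 hh
    have t1 : (fun s => T (τ - s) (h s - h s₀ - (s - s₀) • h')) =o[𝓝 s₀] fun s => s - s₀ := by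
      refine (IsBigO.trans_isLittleO ?_ hho)
      rw [isBigO_iff]
      refine ⟨M, ?_⟩
      have hnb : Set.Icc (s₀ - 1) (s₀ + 1) ∈ 𝓝 s₀ :=
        Icc_mem_nhds (by linarith) (by linarith)
      filter_upwards [hnb] with s hs
      have hmem : τ - s ∈ Set.Icc (τ - s₀ - 1) (τ - s₀ + 1) := by
        constructor <;> [linarith [hs.2]; linarith [hs.1]]
      calc ‖T (τ - s) (h s - h s₀ - (s - s₀) • h')‖
          ≤ ‖T (τ - s)‖ * ‖h s - h s₀ - (s - s₀) • h'‖ := (T (τ - s)).le_opNorm _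
        _ ≤ M * ‖h s - h s₀ - (s - s₀) • h'‖ :=
            mul_le_mul_of_nonneg_right (hM ⟨_, hmem⟩) (norm_nonneg _)
    have t2 : (fun s => (s - s₀) • (T (τ - s) h' - T (τ - s₀) h')) =o[𝓝 s₀] fun s => s - s₀ := by
      rw [isLittleO_iff]
      intro c hc
      have htend : Tendsto (fun s : ℝ => T (τ - s) h') (𝓝 s₀) (𝓝 (T (τ - s₀) h')) :=
        ((hcont h').comp (continuous_const.sub continuous_id)).continuousAt
      have := (NormedAddCommGroup.tendsto_nhds_nhds.1 htend) c hc
      obtain ⟨δ, hδ, hδ'⟩ := this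
      filter_upwards [Metric.ball_mem_nhds s₀ hδ] with s hs
      rw [norm_smul]
      have : ‖T (τ - s) h' - T (τ - s₀) h'‖ ≤ c := le_of_lt (hδ' s (mem_ball_iff_norm.1 hs))
      calc ‖s - s₀‖ * ‖T (τ - s) h' - T (τ - s₀) h'‖ ≤ ‖s - s₀‖ * c :=
            mul_le_mul_of_nonneg_left this (norm_nonneg _)
        _ = c * ‖s - s₀‖ := mul_comm _ _
    have hsum := t1.add t2
    refine hsum.congr' ?_ (EventuallyEq.refl _ _)
    filter_upwards with s
    simp only [map_sub, map_smul, smul_sub]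
    abel
  have hF := hG1.add hG2
  have hfun : (fun s => T (τ - s) (h s - h s₀) + T (τ - s) (h s₀)) = fun s => T (τ - s) (h s) := by
    funext s; rw [map_sub]; abel
  rw [show ((fun s => T (τ - s) (h s - h s₀)) + fun s => T (τ - s) (h s₀)) = fun s => T (τ - s) (h s) from hfun] at hF
  have hder : T (τ - s₀) h' + -(L (T (τ - s₀) (h s₀))) = T (τ - s₀) (h' - L (h s₀)) := by
    rw [map_sub, hTL]; abel
  rwa [hder] at hF


/-- Second derivative of the quadrature-error function in the local error analysis
of the Strang splitting: with `A(x) = L(x) + c` affine, `T` the semigroup of `L`,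
`Φ` the affine flow of `A`, and `B` twice continuously differentiable, the function
`f(s) = T(τ−s)(B(Φ(s)(v₀)))` is twice differentiable with
`f''(s) = T(τ−s)([[B,A],A](Φ(s)(v₀)))`, where `[B,A](u) = B'(u)[A(u)] − L(B(u))`
and `[[B,A],A](u) = ([B,A])'(u)[A(u)] − L([B,A](u))`. -/
theorem strang_splitting_quadrature_second_derivative
    {E : Type*} [NormedAddCommGroup E] [NormedSpace ℝ E] [CompleteSpace E]
    (L : E →L[ℝ] E) (c : E) (A : E → E) (hA : ∀ x : E, A x = L x + c)
    (T : ℝ → E →L[ℝ] E)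
    (hT : ∀ (x : E) (s : ℝ), HasDerivAt (fun σ : ℝ => T σ x) (L (T s x)) s)
    (hTL : ∀ (s : ℝ) (x : E), T s (L x) = L (T s x))
    (Φ : ℝ → E → E) (γ : ℝ → E)
    (hΦ : ∀ (s : ℝ) (x : E), Φ s x = T s x + γ s)
    (hflow : ∀ (s : ℝ) (x : E), HasDerivAt (fun σ : ℝ => Φ σ x) (A (Φ s x)) s)
    (B : E → E) (hB : ContDiff ℝ 2 B) (v₀ : E) (τ : ℝ)
    (f : ℝ → E) (hf : ∀ s : ℝ, f s = T (τ - s) (B (Φ s v₀)))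
    (comm : E → E) (hcomm : ∀ u : E, comm u = fderiv ℝ B u (A u) - L (B u)) :
    (∀ s : ℝ, DifferentiableAt ℝ f s) ∧
      ∀ s : ℝ, HasDerivAt (deriv f)
        (T (τ - s) (fderiv ℝ comm (Φ s v₀) (A (Φ s v₀)) - L (comm (Φ s v₀)))) s := by
  have hfeq : f = fun s => T (τ - s) (B (Φ s v₀)) := funext hf
  have hAeq : A = fun x => L x + c := funext hA
  have hAcd : ContDiff ℝ 1 A := by rw [hAeq]; exact L.contDiff.add contDiff_const
  -- first derivative
  have hf1 : ∀ s : ℝ, HasDerivAt f (T (τ - s) (comm (Φ s v₀))) s := by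
    intro s
    have hBd : HasFDerivAt B (fderiv ℝ B (Φ s v₀)) (Φ s v₀) :=
      (hB.differentiable (by norm_num) (Φ s v₀)).hasFDerivAt
    have hh : HasDerivAt (fun σ => B (Φ σ v₀)) (fderiv ℝ B (Φ s v₀) (A (Φ s v₀))) s :=
      hBd.comp_hasDerivAt s (hflow s v₀)
    have := strang_key L T hT hTL τ s (fun σ => B (Φ σ v₀)) _ hh
    rw [hfeq, hcomm]
    exact this
  have hdf : deriv f = fun s => T (τ - s) (comm (Φ s v₀)) :=
    funext fun s => (hf1 s).deriv
  refine ⟨fun s => (hf1 s).differentiableAt, fun s => ?_⟩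
  -- comm is C¹
  have hcommeq : comm = fun u => fderiv ℝ B u (A u) - L (B u) := funext hcomm
  have hcommcd : ContDiff ℝ 1 comm := by
    rw [hcommeq]
    exact ((hB.fderiv_right (by norm_num)).clm_apply hAcd).sub
      (L.contDiff.comp (hB.of_le one_le_two))
  have hcd : HasFDerivAt comm (fderiv ℝ comm (Φ s v₀)) (Φ s v₀) :=
    (hcommcd.differentiable one_ne_zero (Φ s v₀)).hasFDerivAt
  have hh : HasDerivAt (fun σ => comm (Φ σ v₀)) (fderiv ℝ comm (Φ s v₀) (A (Φ s v₀))) s :=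
    hcd.comp_hasDerivAt s (hflow s v₀)
  have := strang_key L T hT hTL τ s (fun σ => comm (Φ σ v₀)) _ hh
  rw [hdf]
  exact this
end

section
/- Let d ≥ 1. Let u, w : ℝ^d → ℂ be continuously differentiable and bounded, with ∇u, ∇w ∈ L²(ℝ^d), 1−|u|² ∈ L²(ℝ^d), 1−|w|² ∈ L²(ℝ^d), u − w ∈ L²(ℝ^d) and ∇u − ∇w ∈ L²(ℝ^d), and let V ∈ L²(ℝ^d; ℝ). Then the Ginzburg–Landau energies E(u) and E(w) are finite and |E(u) − E(w)| ≤ (‖∇u‖_{L²} + ‖∇w‖_{L²})·‖∇u − ∇w‖_{L²} + (1/2)·(‖u‖_{L^∞} + ‖w‖_{L^∞})·(‖1−|u|²‖_{L²} + ‖1−|w|²‖_{L²})·‖u − w‖_{L²} + ‖V‖_{L²}·(‖u‖_{L^∞} + ‖w‖_{L^∞})·‖u − w‖_{L²}. -/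
open MeasureTheory
open scoped ENNReal NNReal

/-- Partial derivative in the `k`-th coordinate direction. -/
noncomputable def pd {d : ℕ} {F : Type*} [NormedAddCommGroup F] [NormedSpace ℝ F]
    (f : EuclideanSpace ℝ (Fin d) → F) (k : Fin d) (x : EuclideanSpace ℝ (Fin d)) : F :=
  fderiv ℝ f x (EuclideanSpace.single k 1)

/-- `L²` norm. -/
noncomputable def L2N {d : ℕ} {F : Type*} [NormedAddCommGroup F]
    (f : EuclideanSpace ℝ (Fin d) → F) : ℝ :=
  (eLpNorm f 2 volume).toReal

/-- `L^∞` (essential supremum) norm. -/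
noncomputable def LinfN {d : ℕ} {F : Type*} [NormedAddCommGroup F]
    (f : EuclideanSpace ℝ (Fin d) → F) : ℝ :=
  (eLpNorm f ⊤ volume).toReal

/-- `L²` norm of the gradient: `(∫ Σ_k |∂_k u|²)^{1/2}`. -/
noncomputable def gradL2 {d : ℕ} (u : EuclideanSpace ℝ (Fin d) → ℂ) : ℝ :=
  Real.sqrt (∫ x, ∑ k : Fin d, ‖pd u k x‖ ^ 2)

/-- The Ginzburg–Landau energy
`E(u) = ∫ |∇u|² + (1/2) ∫ (1−|u|²)² + ∫ V (1−|u|²)`. -/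
noncomputable def GLenergy {d : ℕ} (u : EuclideanSpace ℝ (Fin d) → ℂ)
    (V : EuclideanSpace ℝ (Fin d) → ℝ) : ℝ :=
  (∫ x, ∑ k : Fin d, ‖pd u k x‖ ^ 2)
    + (1 / 2) * (∫ x, (1 - ‖u x‖ ^ 2) ^ 2)
    + ∫ x, V x * (1 - ‖u x‖ ^ 2)

section Aux

variable {X : Type*} [MeasurableSpace X] {μ : Measure X}

lemma rpow_two' (y : ℝ) : y ^ (2:ℝ) = y ^ 2 := by
  rw [show (2:ℝ) = ((2:ℕ):ℝ) by norm_num, Real.rpow_natCast]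

lemma my_CS {F G : Type*} [NormedAddCommGroup F] [NormedAddCommGroup G]
    {f : X → F} {g : X → G} (hf : MemLp f 2 μ) (hg : MemLp g 2 μ) :
    ∫ a, ‖f a‖ * ‖g a‖ ∂μ ≤
      Real.sqrt (∫ a, ‖f a‖ ^ 2 ∂μ) * Real.sqrt (∫ a, ‖g a‖ ^ 2 ∂μ) := by
  have hconj : (2 : ℝ).HolderConjugate 2 := Real.HolderConjugate.two_two
  have h2 : ENNReal.ofReal (2 : ℝ) = 2 := by norm_num
  have hf2 : MemLp f (ENNReal.ofReal (2:ℝ)) μ := by rwa [h2]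
  have hg2 : MemLp g (ENNReal.ofReal (2:ℝ)) μ := by rwa [h2]
  have := integral_mul_norm_le_Lp_mul_Lq (μ := μ) hconj hf2.norm hg2.norm
  simp_rw [rpow_two', norm_norm] at this
  rw [Real.sqrt_eq_rpow, Real.sqrt_eq_rpow]
  exact this

lemma my_L2eq {F : Type*} [NormedAddCommGroup F] {f : X → F} (hf : MemLp f 2 μ) :
    (eLpNorm f 2 μ).toReal = Real.sqrt (∫ a, ‖f a‖ ^ 2 ∂μ) := by
  rw [hf.eLpNorm_eq_integral_rpow_norm two_ne_zero ENNReal.ofNat_ne_top,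
    ENNReal.toReal_ofReal (by positivity), Real.sqrt_eq_rpow]
  norm_num [rpow_two']

lemma my_tri {F : Type*} [NormedAddCommGroup F] {f g : X → F}
    (hf : MemLp f 2 μ) (hg : MemLp g 2 μ) (hfg : MemLp (f - g) 2 μ) :
    Real.sqrt (∫ a, ‖f a‖ ^ 2 ∂μ) ≤
      Real.sqrt (∫ a, ‖f a - g a‖ ^ 2 ∂μ) + Real.sqrt (∫ a, ‖g a‖ ^ 2 ∂μ) := by
  have e : Real.sqrt (∫ a, ‖f a - g a‖ ^ 2 ∂μ) = (eLpNorm (f - g) 2 μ).toReal := by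
    rw [my_L2eq hfg]; simp only [Pi.sub_apply]
  rw [← my_L2eq hf, ← my_L2eq hg, e]
  have h : eLpNorm f 2 μ ≤ eLpNorm (f - g) 2 μ + eLpNorm g 2 μ := by
    have hfe : f = (f - g) + g := by ext a; simp
    nth_rewrite 1 [hfe]
    exact eLpNorm_add_le hfg.1 hg.1 one_le_two
  have := ENNReal.toReal_mono (ENNReal.add_ne_top.2 ⟨hfg.2.ne, hg.2.ne⟩) h
  rwa [ENNReal.toReal_add hfg.2.ne hg.2.ne] at this

lemma my_mul_int {f g : X → ℝ} (hf : MemLp f 2 μ) (hg : MemLp g 2 μ) :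
    Integrable (fun x => f x * g x) μ := by
  refine Integrable.mono' (((hf.integrable_sq.add hg.integrable_sq).const_mul (1/2)))
    (hf.1.mul hg.1) (ae_of_all _ fun x => ?_)
  simp only [Pi.add_apply, Real.norm_eq_abs, abs_mul]
  nlinarith [sq_nonneg (|f x| - |g x|), sq_abs (f x), sq_abs (g x)]

lemma my_ae_linf {F : Type*} [NormedAddCommGroup F] {f : X → F} (hf : MemLp f ⊤ μ) :
    ∀ᵐ x ∂μ, ‖f x‖ ≤ (eLpNorm f ⊤ μ).toReal := by
  filter_upwards [enorm_ae_le_eLpNormEssSup f μ] with x hx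
  have h2 : (‖f x‖ₑ).toReal ≤ (eLpNormEssSup f μ).toReal :=
    ENNReal.toReal_mono (by simpa [eLpNorm_exponent_top] using hf.2.ne) hx
  simpa [eLpNorm_exponent_top] using h2

lemma ptB {a b mu mw duw : ℝ} (ha : 0 ≤ a) (hb : 0 ≤ b) (hau : a ≤ mu) (hbw : b ≤ mw)
    (hd : |a - b| ≤ duw) :
    |(1 - a^2)^2 - (1 - b^2)^2| ≤ (mu + mw) * ((|1 - a^2| + |1 - b^2|) * duw) := by
  have hmm : (0:ℝ) ≤ mu + mw := by linarith
  have hduw : (0:ℝ) ≤ duw := le_trans (abs_nonneg _) hd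
  have h1 : |a^2 - b^2| ≤ (mu + mw) * duw := by
    rw [show a^2 - b^2 = (a+b)*(a-b) by ring, abs_mul]
    have h2 : |a+b| ≤ mu + mw := by rw [abs_of_nonneg (by linarith)]; linarith
    exact mul_le_mul h2 hd (abs_nonneg _) hmm
  calc |(1-a^2)^2 - (1-b^2)^2| = |(1-a^2)+(1-b^2)| * |a^2-b^2| := by
        rw [← abs_mul, show ((1-a^2)+(1-b^2)) * (a^2-b^2) = -((1-a^2)^2 - (1-b^2)^2) by ring,
          abs_neg]
    _ ≤ (|1-a^2|+|1-b^2|) * ((mu+mw)*duw) :=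
        mul_le_mul (abs_add_le _ _) h1 (abs_nonneg _) (by positivity)
    _ = (mu+mw) * ((|1-a^2|+|1-b^2|)*duw) := by ring

lemma ptC {a b v mu mw duw : ℝ} (ha : 0 ≤ a) (hb : 0 ≤ b) (hau : a ≤ mu) (hbw : b ≤ mw)
    (hd : |a - b| ≤ duw) :
    |v * (1 - a^2) - v * (1 - b^2)| ≤ (mu + mw) * (|v| * duw) := by
  have hmm : (0:ℝ) ≤ mu + mw := by linarith
  have hduw : (0:ℝ) ≤ duw := le_trans (abs_nonneg _) hd
  have h1 : |a^2 - b^2| ≤ (mu + mw) * duw := by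
    rw [show a^2 - b^2 = (a+b)*(a-b) by ring, abs_mul]
    have h2 : |a+b| ≤ mu + mw := by rw [abs_of_nonneg (by linarith)]; linarith
    exact mul_le_mul h2 hd (abs_nonneg _) hmm
  calc |v * (1 - a^2) - v * (1 - b^2)| = |v| * |a^2 - b^2| := by
        rw [← abs_mul, show v * (a^2-b^2) = -(v * (1 - a^2) - v * (1 - b^2)) by ring, abs_neg]
    _ ≤ |v| * ((mu+mw)*duw) := mul_le_mul_of_nonneg_left h1 (abs_nonneg _)
    _ = (mu+mw) * (|v| * duw) := by ring

/-- If the components of `G` are given by applying an `L²` family of continuous linear maps to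
the basis vectors, then `G` is in `L²`. -/
lemma grad_memLp {d : ℕ} {T : EuclideanSpace ℝ (Fin d) → (EuclideanSpace ℝ (Fin d) →L[ℝ] ℂ)}
    (hT : MemLp T 2 volume) {G : EuclideanSpace ℝ (Fin d) → EuclideanSpace ℂ (Fin d)}
    (hG : Continuous G) (hcomp : ∀ x k, G x k = T x (EuclideanSpace.single k 1)) :
    MemLp G 2 volume := by
  refine hT.of_le_mul (c := Real.sqrt d) hG.aestronglyMeasurable (ae_of_all _ fun x => ?_)
  rw [EuclideanSpace.norm_eq]
  calc Real.sqrt (∑ k : Fin d, ‖G x k‖ ^ 2)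
      ≤ Real.sqrt (∑ k : Fin d, ‖T x‖ ^ 2) := by
        apply Real.sqrt_le_sqrt
        apply Finset.sum_le_sum
        intro k _
        have h1 : ‖G x k‖ ≤ ‖T x‖ := by
          rw [hcomp]
          calc ‖T x (EuclideanSpace.single k 1)‖ ≤ ‖T x‖ * ‖EuclideanSpace.single k (1:ℝ)‖ :=
                (T x).le_opNorm _
            _ = ‖T x‖ := by rw [EuclideanSpace.norm_single]; simp
        exact pow_le_pow_left₀ (norm_nonneg _) h1 2
    _ = Real.sqrt d * ‖T x‖ := by
        rw [Finset.sum_const, Finset.card_univ, Fintype.card_fin, nsmul_eq_mul,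
          Real.sqrt_mul (by positivity), Real.sqrt_sq (norm_nonneg _)]

end Aux

set_option maxHeartbeats 2000000 in
/-- Lipschitz-type estimate for the Ginzburg–Landau energy: the energies of `u`
and `w` are finite, and `|E(u) − E(w)|` is bounded by the `L²` and gradient-`L²`
distances between `u` and `w`. -/
theorem energy_difference_estimate (d : ℕ) (hd : 1 ≤ d)
    (u w : EuclideanSpace ℝ (Fin d) → ℂ) (V : EuclideanSpace ℝ (Fin d) → ℝ)
    (hu : ContDiff ℝ 1 u) (hw : ContDiff ℝ 1 w)
    (hub : ∃ M : ℝ, ∀ x, ‖u x‖ ≤ M) (hwb : ∃ M : ℝ, ∀ x, ‖w x‖ ≤ M)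
    (hgu : MemLp (fderiv ℝ u) 2 volume) (hgw : MemLp (fderiv ℝ w) 2 volume)
    (hmu : MemLp (fun x => 1 - ‖u x‖ ^ 2) 2 volume)
    (hmw : MemLp (fun x => 1 - ‖w x‖ ^ 2) 2 volume)
    (huw : MemLp (fun x => u x - w x) 2 volume)
    (hguw : MemLp (fun x => fderiv ℝ u x - fderiv ℝ w x) 2 volume)
    (hV : MemLp V 2 volume) :
    (Integrable (fun x => ∑ k : Fin d, ‖pd u k x‖ ^ 2) volume ∧
      Integrable (fun x => (1 - ‖u x‖ ^ 2) ^ 2) volume ∧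
      Integrable (fun x => V x * (1 - ‖u x‖ ^ 2)) volume ∧
      Integrable (fun x => ∑ k : Fin d, ‖pd w k x‖ ^ 2) volume ∧
      Integrable (fun x => (1 - ‖w x‖ ^ 2) ^ 2) volume ∧
      Integrable (fun x => V x * (1 - ‖w x‖ ^ 2)) volume) ∧
    |GLenergy u V - GLenergy w V| ≤
      (gradL2 u + gradL2 w) *
          Real.sqrt (∫ x, ∑ k : Fin d, ‖pd u k x - pd w k x‖ ^ 2)
        + (1 / 2) * (LinfN u + LinfN w) *
            (L2N (fun x => 1 - ‖u x‖ ^ 2)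
              + L2N (fun x => 1 - ‖w x‖ ^ 2)) *
            L2N (fun x => u x - w x)
        + L2N V * (LinfN u + LinfN w) * L2N (fun x => u x - w x) := by
  classical
  obtain ⟨Mu0, hMu0⟩ := hub
  obtain ⟨Mw0, hMw0⟩ := hwb
  have hcu : Continuous u := hu.continuous
  have hcw : Continuous w := hw.continuous
  have hcfu : Continuous (fderiv ℝ u) := hu.continuous_fderiv one_ne_zero
  have hcfw : Continuous (fderiv ℝ w) := hw.continuous_fderiv one_ne_zero
  have hpdcu : ∀ k, Continuous (pd u k) := fun k => hcfu.clm_apply continuous_const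
  have hpdcw : ∀ k, Continuous (pd w k) := fun k => hcfw.clm_apply continuous_const
  have hpdle : ∀ (v : EuclideanSpace ℝ (Fin d) → ℂ) k x, ‖pd v k x‖ ≤ ‖fderiv ℝ v x‖ := by
    intro v k x
    have h := (fderiv ℝ v x).le_opNorm (EuclideanSpace.single k (1:ℝ))
    rw [EuclideanSpace.norm_single] at h
    simpa [pd] using h
  have hpdu : ∀ k, MemLp (pd u k) 2 volume := fun k =>
    hgu.of_le (hpdcu k).aestronglyMeasurable (ae_of_all _ fun x => hpdle u k x)
  have hpdw : ∀ k, MemLp (pd w k) 2 volume := fun k =>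
    hgw.of_le (hpdcw k).aestronglyMeasurable (ae_of_all _ fun x => hpdle w k x)
  -- Integrability
  have Iu1 : Integrable (fun x => ∑ k : Fin d, ‖pd u k x‖ ^ 2) volume := by
    apply integrable_finset_sum
    intro k _
    simpa using ((hpdu k).norm).integrable_sq
  have Iw1 : Integrable (fun x => ∑ k : Fin d, ‖pd w k x‖ ^ 2) volume := by
    apply integrable_finset_sum
    intro k _
    simpa using ((hpdw k).norm).integrable_sq
  have Iu2 : Integrable (fun x => (1 - ‖u x‖ ^ 2) ^ 2) volume := hmu.integrable_sq
  have Iw2 : Integrable (fun x => (1 - ‖w x‖ ^ 2) ^ 2) volume := hmw.integrable_sq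
  have Iu3 : Integrable (fun x => V x * (1 - ‖u x‖ ^ 2)) volume := my_mul_int hV hmu
  have Iw3 : Integrable (fun x => V x * (1 - ‖w x‖ ^ 2)) volume := my_mul_int hV hmw
  refine ⟨⟨Iu1, Iu2, Iu3, Iw1, Iw2, Iw3⟩, ?_⟩
  -- L^∞ bounds
  have huT : MemLp u ⊤ volume :=
    memLp_top_of_bound hcu.aestronglyMeasurable Mu0 (ae_of_all _ hMu0)
  have hwT : MemLp w ⊤ volume :=
    memLp_top_of_bound hcw.aestronglyMeasurable Mw0 (ae_of_all _ hMw0)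
  have haeu : ∀ᵐ x ∂(volume : Measure (EuclideanSpace ℝ (Fin d))), ‖u x‖ ≤ LinfN u :=
    my_ae_linf huT
  have haew : ∀ᵐ x ∂(volume : Measure (EuclideanSpace ℝ (Fin d))), ‖w x‖ ≤ LinfN w :=
    my_ae_linf hwT
  have hMu : 0 ≤ LinfN u := ENNReal.toReal_nonneg
  have hMw : 0 ≤ LinfN w := ENNReal.toReal_nonneg
  -- gradient vector fields
  set g : EuclideanSpace ℝ (Fin d) → EuclideanSpace ℂ (Fin d) :=
    fun x => WithLp.toLp 2 fun k => pd u k x with hgdef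
  set h : EuclideanSpace ℝ (Fin d) → EuclideanSpace ℂ (Fin d) :=
    fun x => WithLp.toLp 2 fun k => pd w k x with hhdef
  have hgc : Continuous g :=
    (PiLp.continuous_toLp 2 (fun _ : Fin d => ℂ)).comp
      (continuous_pi fun k => hpdcu k)
  have hhc : Continuous h :=
    (PiLp.continuous_toLp 2 (fun _ : Fin d => ℂ)).comp
      (continuous_pi fun k => hpdcw k)
  have hgl2 : MemLp g 2 volume := grad_memLp hgu hgc (fun x k => rfl)
  have hhl2 : MemLp h 2 volume := grad_memLp hgw hhc (fun x k => rfl)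
  have hgd : MemLp (g - h) 2 volume := by
    refine grad_memLp hguw (hgc.sub hhc) (fun x k => ?_)
    show g x k - h x k = _
    simp [hgdef, hhdef, pd, ContinuousLinearMap.sub_apply]
  have hgnorm : ∀ x, ‖g x‖ ^ 2 = ∑ k : Fin d, ‖pd u k x‖ ^ 2 := fun x => by
    rw [EuclideanSpace.norm_eq, Real.sq_sqrt (by positivity)]
  have hhnorm : ∀ x, ‖h x‖ ^ 2 = ∑ k : Fin d, ‖pd w k x‖ ^ 2 := fun x => by
    rw [EuclideanSpace.norm_eq, Real.sq_sqrt (by positivity)]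
  have hdnorm : ∀ x, ‖g x - h x‖ ^ 2 = ∑ k : Fin d, ‖pd u k x - pd w k x‖ ^ 2 :=
    fun x => by
    rw [EuclideanSpace.norm_eq, Real.sq_sqrt (by positivity)]
    rfl
  -- A-term
  have Au_eq : (∫ x, ∑ k : Fin d, ‖pd u k x‖ ^ 2) = ∫ x, ‖g x‖ ^ 2 := by
    exact integral_congr_ae (ae_of_all _ fun x => (hgnorm x).symm)
  have Aw_eq : (∫ x, ∑ k : Fin d, ‖pd w k x‖ ^ 2) = ∫ x, ‖h x‖ ^ 2 := by
    exact integral_congr_ae (ae_of_all _ fun x => (hhnorm x).symm)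
  have D_eq : (∫ x, ∑ k : Fin d, ‖pd u k x - pd w k x‖ ^ 2)
      = ∫ x, ‖g x - h x‖ ^ 2 := by
    exact integral_congr_ae (ae_of_all _ fun x => (hdnorm x).symm)
  set D : ℝ := Real.sqrt (∫ x, ∑ k : Fin d, ‖pd u k x - pd w k x‖ ^ 2) with hDdef
  have hDnn : 0 ≤ D := Real.sqrt_nonneg _
  have hGunn : 0 ≤ gradL2 u := Real.sqrt_nonneg _
  have hGwnn : 0 ≤ gradL2 w := Real.sqrt_nonneg _
  have htri1 : gradL2 u ≤ D + gradL2 w := by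
    rw [gradL2, gradL2, hDdef, Au_eq, Aw_eq, D_eq]
    have := my_tri hgl2 hhl2 hgd
    simpa using this
  have htri2 : gradL2 w ≤ D + gradL2 u := by
    rw [gradL2, gradL2, hDdef, Au_eq, Aw_eq, D_eq]
    have hgd' : MemLp (h - g) 2 volume := by
      have := hgd.neg
      simpa [neg_sub] using this
    have := my_tri hhl2 hgl2 hgd'
    have e : (∫ x, ‖h x - g x‖ ^ 2) = ∫ x, ‖g x - h x‖ ^ 2 := by
      simp_rw [norm_sub_rev]
    rwa [e] at this
  have hAu : (∫ x, ∑ k : Fin d, ‖pd u k x‖ ^ 2) = gradL2 u ^ 2 := by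
    rw [gradL2]
    exact (Real.sq_sqrt (integral_nonneg fun x =>
      Finset.sum_nonneg fun k _ => sq_nonneg _)).symm
  have hAw : (∫ x, ∑ k : Fin d, ‖pd w k x‖ ^ 2) = gradL2 w ^ 2 := by
    rw [gradL2]
    exact (Real.sq_sqrt (integral_nonneg fun x =>
      Finset.sum_nonneg fun k _ => sq_nonneg _)).symm
  have hA : |(∫ x, ∑ k : Fin d, ‖pd u k x‖ ^ 2)
      - ∫ x, ∑ k : Fin d, ‖pd w k x‖ ^ 2| ≤ (gradL2 u + gradL2 w) * D := by
    rw [hAu, hAw, abs_le]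
    constructor <;> nlinarith [htri1, htri2, hDnn, hGunn, hGwnn]
  -- abbreviations
  set Mu := LinfN u
  set Mw := LinfN w
  set Nuw := L2N (fun x => u x - w x) with hNuwdef
  have hNuw : Nuw = Real.sqrt (∫ x, ‖u x - w x‖ ^ 2) := my_L2eq huw
  set N1 := L2N (fun x => 1 - ‖u x‖ ^ 2) with hN1def
  have hN1 : N1 = Real.sqrt (∫ x, ‖1 - ‖u x‖ ^ 2‖ ^ 2) := my_L2eq hmu
  set N2 := L2N (fun x => 1 - ‖w x‖ ^ 2) with hN2def
  have hN2 : N2 = Real.sqrt (∫ x, ‖1 - ‖w x‖ ^ 2‖ ^ 2) := my_L2eq hmw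
  set NV := L2N V with hNVdef
  have hNV : NV = Real.sqrt (∫ x, ‖V x‖ ^ 2) := my_L2eq hV
  -- B-term
  have CS1 : (∫ x, ‖1 - ‖u x‖ ^ 2‖ * ‖u x - w x‖) ≤ N1 * Nuw := by
    rw [hN1, hNuw]; exact my_CS hmu huw
  have CS2 : (∫ x, ‖1 - ‖w x‖ ^ 2‖ * ‖u x - w x‖) ≤ N2 * Nuw := by
    rw [hN2, hNuw]; exact my_CS hmw huw
  have CSV : (∫ x, ‖V x‖ * ‖u x - w x‖) ≤ NV * Nuw := by
    rw [hNV, hNuw]; exact my_CS hV huw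
  have IB1 : Integrable (fun x => ‖1 - ‖u x‖ ^ 2‖ * ‖u x - w x‖) volume :=
    my_mul_int hmu.norm huw.norm
  have IB2 : Integrable (fun x => ‖1 - ‖w x‖ ^ 2‖ * ‖u x - w x‖) volume :=
    my_mul_int hmw.norm huw.norm
  have ICV : Integrable (fun x => ‖V x‖ * ‖u x - w x‖) volume :=
    my_mul_int hV.norm huw.norm
  have hB : |(∫ x, (1 - ‖u x‖ ^ 2) ^ 2) - ∫ x, (1 - ‖w x‖ ^ 2) ^ 2|
      ≤ (Mu + Mw) * ((N1 + N2) * Nuw) := by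
    rw [← integral_sub Iu2 Iw2]
    have hptwise : ∀ᵐ x ∂(volume : Measure (EuclideanSpace ℝ (Fin d))),
        ‖(1 - ‖u x‖ ^ 2) ^ 2 - (1 - ‖w x‖ ^ 2) ^ 2‖ ≤
          (Mu + Mw) * ((‖1 - ‖u x‖ ^ 2‖ + ‖1 - ‖w x‖ ^ 2‖)
            * ‖u x - w x‖) := by
      filter_upwards [haeu, haew] with x h1 h2
      have hd' : |‖u x‖ - ‖w x‖| ≤ ‖u x - w x‖ := by
        simpa using abs_norm_sub_norm_le (u x) (w x)
      have := ptB (mu := Mu) (mw := Mw) (duw := ‖u x - w x‖)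
        (norm_nonneg (u x)) (norm_nonneg (w x))
        h1 h2 hd'
      simpa [Real.norm_eq_abs] using this
    calc |∫ x, ((1 - ‖u x‖ ^ 2) ^ 2 - (1 - ‖w x‖ ^ 2) ^ 2)|
        ≤ ∫ x, ‖(1 - ‖u x‖ ^ 2) ^ 2 - (1 - ‖w x‖ ^ 2) ^ 2‖ := by
          exact
            norm_integral_le_integral_norm (μ := volume)
              (fun x => (1 - ‖u x‖ ^ 2) ^ 2 - (1 - ‖w x‖ ^ 2) ^ 2)
      _ ≤ ∫ x, (Mu + Mw) * ((‖1 - ‖u x‖ ^ 2‖ + ‖1 - ‖w x‖ ^ 2‖)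
            * ‖u x - w x‖) := by
          refine integral_mono_ae (Iu2.sub Iw2).norm ?_ hptwise
          refine Integrable.const_mul ?_ _
          have : Integrable (fun x =>
              ‖1 - ‖u x‖ ^ 2‖ * ‖u x - w x‖
                + ‖1 - ‖w x‖ ^ 2‖ * ‖u x - w x‖) volume := IB1.add IB2
          simpa [add_mul] using this
      _ = (Mu + Mw) * ∫ x, ((‖1 - ‖u x‖ ^ 2‖ + ‖1 - ‖w x‖ ^ 2‖)
            * ‖u x - w x‖) := integral_const_mul _ _
      _ ≤ (Mu + Mw) * ((N1 + N2) * Nuw) := by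
          have e : (∫ x, (‖1 - ‖u x‖ ^ 2‖ + ‖1 - ‖w x‖ ^ 2‖)
              * ‖u x - w x‖)
              = (∫ x, ‖1 - ‖u x‖ ^ 2‖ * ‖u x - w x‖)
                + ∫ x, ‖1 - ‖w x‖ ^ 2‖ * ‖u x - w x‖ := by
            simp_rw [add_mul]
            exact integral_add IB1 IB2
          rw [e]
          have : (∫ x, ‖1 - ‖u x‖ ^ 2‖ * ‖u x - w x‖)
              + ∫ x, ‖1 - ‖w x‖ ^ 2‖ * ‖u x - w x‖ ≤ N1 * Nuw + N2 * Nuw :=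
            add_le_add CS1 CS2
          calc (Mu + Mw) * ((∫ x, ‖1 - ‖u x‖ ^ 2‖ * ‖u x - w x‖)
                + ∫ x, ‖1 - ‖w x‖ ^ 2‖ * ‖u x - w x‖)
              ≤ (Mu + Mw) * (N1 * Nuw + N2 * Nuw) :=
                mul_le_mul_of_nonneg_left this (by linarith)
            _ = (Mu + Mw) * ((N1 + N2) * Nuw) := by ring
  -- C-term
  have hC : |(∫ x, V x * (1 - ‖u x‖ ^ 2)) - ∫ x, V x * (1 - ‖w x‖ ^ 2)|
      ≤ (Mu + Mw) * (NV * Nuw) := by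
    rw [← integral_sub Iu3 Iw3]
    have hptwise : ∀ᵐ x ∂(volume : Measure (EuclideanSpace ℝ (Fin d))),
        ‖V x * (1 - ‖u x‖ ^ 2) - V x * (1 - ‖w x‖ ^ 2)‖ ≤
          (Mu + Mw) * (‖V x‖ * ‖u x - w x‖) := by
      filter_upwards [haeu, haew] with x h1 h2
      have hd' : |‖u x‖ - ‖w x‖| ≤ ‖u x - w x‖ := by
        simpa using abs_norm_sub_norm_le (u x) (w x)
      have := ptC (v := V x) (mu := Mu) (mw := Mw) (duw := ‖u x - w x‖)
        (norm_nonneg (u x)) (norm_nonneg (w x))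
        h1 h2 hd'
      simpa [Real.norm_eq_abs] using this
    calc |∫ x, (V x * (1 - ‖u x‖ ^ 2) - V x * (1 - ‖w x‖ ^ 2))|
        ≤ ∫ x, ‖V x * (1 - ‖u x‖ ^ 2) - V x * (1 - ‖w x‖ ^ 2)‖ := by
          exact
            norm_integral_le_integral_norm (μ := volume)
              (fun x => V x * (1 - ‖u x‖ ^ 2) - V x * (1 - ‖w x‖ ^ 2))
      _ ≤ ∫ x, (Mu + Mw) * (‖V x‖ * ‖u x - w x‖) := by
          refine integral_mono_ae (Iu3.sub Iw3).norm (ICV.const_mul _) hptwise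
      _ = (Mu + Mw) * ∫ x, ‖V x‖ * ‖u x - w x‖ := integral_const_mul _ _
      _ ≤ (Mu + Mw) * (NV * Nuw) := mul_le_mul_of_nonneg_left CSV (by linarith)
  -- assemble
  have hE : GLenergy u V - GLenergy w V =
      ((∫ x, ∑ k : Fin d, ‖pd u k x‖ ^ 2)
        - ∫ x, ∑ k : Fin d, ‖pd w k x‖ ^ 2)
      + (1/2) * ((∫ x, (1 - ‖u x‖ ^ 2) ^ 2)
        - ∫ x, (1 - ‖w x‖ ^ 2) ^ 2)
      + ((∫ x, V x * (1 - ‖u x‖ ^ 2))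
        - ∫ x, V x * (1 - ‖w x‖ ^ 2)) := by
    simp only [GLenergy]; ring
  calc |GLenergy u V - GLenergy w V|
      ≤ |(∫ x, ∑ k : Fin d, ‖pd u k x‖ ^ 2)
          - ∫ x, ∑ k : Fin d, ‖pd w k x‖ ^ 2|
        + (1/2) * |(∫ x, (1 - ‖u x‖ ^ 2) ^ 2)
          - ∫ x, (1 - ‖w x‖ ^ 2) ^ 2|
        + |(∫ x, V x * (1 - ‖u x‖ ^ 2))
          - ∫ x, V x * (1 - ‖w x‖ ^ 2)| := by
        rw [hE]
        refine (abs_add_three _ _ _).trans ?_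
        rw [abs_mul, abs_of_nonneg (by norm_num : (0:ℝ) ≤ 1/2)]
    _ ≤ (gradL2 u + gradL2 w) * D + (1/2) * ((Mu + Mw) * ((N1 + N2) * Nuw))
        + (Mu + Mw) * (NV * Nuw) := by
        exact add_le_add (add_le_add hA
          (mul_le_mul_of_nonneg_left hB (by norm_num))) hC
    _ = (gradL2 u + gradL2 w) * D + (1/2) * (Mu + Mw) * (N1 + N2) * Nuw
        + NV * (Mu + Mw) * Nuw := by ring
end
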